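/- Let n ≥ 4, 3 ≤ k ≤ n and 0 ≤ z < k, and let Ω be an octahedral system without isolated vertex on V_1,…,V_n with |V_i| = k−1 for i ≤ z, |V_i| = k for z < i ≤ k, and |V_i| = m_i for k < i ≤ n, where k ≤ m_{k+1} ≤ … ≤ m_n. Suppose there is a subset X ⊆ ⋃_{i=z+1}^n V_i with |X| ≥ 2 inducing in D(Ω) a complete subgraph without outneighbour. Then Ω has at least (k−1)² + 2 edges, unless Ω is a (2,2,3,3)-octahedral system (i.e. n = 4, k = 3, z = 2), in which case Ω has at least 5 edges. -/

import Mathlib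

/-- An octahedral system: an `n`-uniform `n`-partite hypergraph on the vertex sets `V i`
(edges pick one vertex from each `V i`) satisfying the parity condition. -/
def IsOctahedralSystem {α : Type*} [DecidableEq α] {n : ℕ}
    (V : Fin n → Finset α) (E : Finset (Fin n → α)) : Prop :=
  (∀ e ∈ E, ∀ i, e i ∈ V i) ∧
  ∀ X : Fin n → Finset α, (∀ i, X i ⊆ V i) → (∀ i, (X i).card = 2) →
    Even ((E.filter fun e => ∀ i, e i ∈ X i).card)

/-- Every vertex belongs to at least one edge. -/
def NoIsolatedVertex {α : Type*} {n : ℕ}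
    (V : Fin n → Finset α) (E : Finset (Fin n → α)) : Prop :=
  ∀ i : Fin n, ∀ v ∈ V i, ∃ e ∈ E, e i = v

/-- The arc relation of the directed graph `D(Ω)`: `(u,v)` is an arc if `u ≠ v` and every
edge containing `v` also contains `u`. -/
def OctArc {α : Type*} {n : ℕ} (E : Finset (Fin n → α)) (u v : α) : Prop :=
  u ≠ v ∧ ∀ e ∈ E, (∃ i, e i = v) → (∃ j, e j = u)


private lemma oct_minweight_aux {α : Type*} [DecidableEq α] {n : ℕ} (N : ℕ) :
    ∀ (S : Finset (Fin n)), S.card ≤ N → S.Nonempty →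
    ∀ (W : Fin n → Finset α) (C : Finset (Fin n → α)), C.Nonempty →
    (∀ e ∈ C, ∀ t ∈ S, e t ∈ W t) →
    (∀ e ∈ C, ∀ f ∈ C, ∀ t, t ∉ S → e t = f t) →
    (∀ P : Fin n → Finset α, (∀ t ∈ S, P t ⊆ W t ∧ (P t).card = 2) →
      Even ((C.filter fun e => ∀ t ∈ S, e t ∈ P t).card)) →
    ∃ t ∈ S, (W t).card ≤ C.card := by
  induction N with
  | zero =>
    intro S hcard hS
    exact absurd (Finset.card_eq_zero.mp (Nat.le_zero.mp hcard)) (hS.ne_empty)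
  | succ N IH =>
    intro S hcard hS W C hC hmem hconst hpar
    obtain ⟨t₀, ht₀⟩ := hS
    set S' := S.erase t₀ with hS'def
    -- parity transfer between fibers
    have htransfer : ∀ a ∈ W t₀, ∀ b ∈ W t₀, a ≠ b →
        ∀ P' : Fin n → Finset α, (∀ t ∈ S', P' t ⊆ W t ∧ (P' t).card = 2) →
        Even ((C.filter fun e => e t₀ = a ∧ ∀ t ∈ S', e t ∈ P' t).card
          + (C.filter fun e => e t₀ = b ∧ ∀ t ∈ S', e t ∈ P' t).card) := by
      intro a ha b hb hab P' hP'
      set P : Fin n → Finset α := Function.update P' t₀ {a, b} with hPdef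
      have hvalid : ∀ t ∈ S, P t ⊆ W t ∧ (P t).card = 2 := by
        intro t ht
        rcases eq_or_ne t t₀ with rfl | hne
        · constructor
          · rw [hPdef, Function.update_self]
            intro c hc
            simp only [Finset.mem_insert, Finset.mem_singleton] at hc
            rcases hc with rfl | rfl
            · exact ha
            · exact hb
          · rw [hPdef, Function.update_self]
            rw [Finset.card_insert_of_notMem (by simp [hab]), Finset.card_singleton]
        · rw [hPdef, Function.update_of_ne hne]
          exact hP' t (Finset.mem_erase.mpr ⟨hne, ht⟩)
      have hbox := hpar P hvalid
      have hiff : ∀ e ∈ C, ((∀ t ∈ S, e t ∈ P t) ↔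
          (e t₀ ∈ ({a, b} : Finset α) ∧ ∀ t ∈ S', e t ∈ P' t)) := by
        intro e _
        constructor
        · intro h
          refine ⟨by simpa [hPdef] using h t₀ ht₀, fun t ht => ?_⟩
          have h1 := h t (Finset.mem_of_mem_erase ht)
          rwa [hPdef, Function.update_of_ne (Finset.ne_of_mem_erase ht)] at h1
        · rintro ⟨h1, h2⟩ t ht
          rcases eq_or_ne t t₀ with rfl | hne
          · simpa [hPdef] using h1
          · rw [hPdef, Function.update_of_ne hne]
            exact h2 t (Finset.mem_erase.mpr ⟨hne, ht⟩)
      rw [Finset.filter_congr hiff] at hbox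
      have hsplit := Finset.card_filter_add_card_filter_not
        (s := C.filter fun e => e t₀ ∈ ({a, b} : Finset α) ∧ ∀ t ∈ S', e t ∈ P' t)
        (p := fun e => e t₀ = a)
      rw [Finset.filter_filter, Finset.filter_filter] at hsplit
      have e1 : (C.filter fun e => (e t₀ ∈ ({a, b} : Finset α) ∧ ∀ t ∈ S', e t ∈ P' t) ∧ e t₀ = a)
          = C.filter fun e => e t₀ = a ∧ ∀ t ∈ S', e t ∈ P' t := by
        apply Finset.filter_congr
        intro e _
        constructor
        · rintro ⟨⟨_, h2⟩, h3⟩; exact ⟨h3, h2⟩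
        · rintro ⟨h1, h2⟩; exact ⟨⟨by simp [h1], h2⟩, h1⟩
      have e2 : (C.filter fun e => (e t₀ ∈ ({a, b} : Finset α) ∧ ∀ t ∈ S', e t ∈ P' t) ∧ ¬ e t₀ = a)
          = C.filter fun e => e t₀ = b ∧ ∀ t ∈ S', e t ∈ P' t := by
        apply Finset.filter_congr
        intro e _
        constructor
        · rintro ⟨⟨h1, h2⟩, h3⟩
          simp only [Finset.mem_insert, Finset.mem_singleton] at h1
          rcases h1 with h1 | h1
          · exact absurd h1 h3
          · exact ⟨h1, h2⟩
        · rintro ⟨h1, h2⟩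
          exact ⟨⟨by simp [h1], h2⟩, by rw [h1]; exact hab.symm⟩
      rw [e1, e2] at hsplit
      rw [← hsplit] at hbox
      exact hbox
    by_cases hodd : ∃ a ∈ W t₀, ∃ P' : Fin n → Finset α,
        (∀ t ∈ S', P' t ⊆ W t ∧ (P' t).card = 2) ∧
        ¬ Even ((C.filter fun e => e t₀ = a ∧ ∀ t ∈ S', e t ∈ P' t).card)
    · -- every fiber over W t₀ is nonempty
      obtain ⟨a₁, ha₁, P', hP', hodd1⟩ := hodd
      have hall : ∀ b ∈ W t₀, ∃ e ∈ C, e t₀ = b := by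
        intro b hb
        have hne : ¬ Even ((C.filter fun e => e t₀ = b ∧ ∀ t ∈ S', e t ∈ P' t).card) := by
          rcases eq_or_ne b a₁ with rfl | hb1
          · exact hodd1
          · intro heven
            have := htransfer a₁ ha₁ b hb (Ne.symm hb1) P' hP'
            rw [Nat.even_add] at this
            exact hodd1 (this.mpr heven)
        have : (C.filter fun e => e t₀ = b ∧ ∀ t ∈ S', e t ∈ P' t).Nonempty := by
          rw [Finset.nonempty_iff_ne_empty]
          intro h
          rw [h] at hne
          exact hne (by simp)
        obtain ⟨e, he⟩ := this
        rw [Finset.mem_filter] at he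
        exact ⟨e, he.1, he.2.1⟩
      refine ⟨t₀, ht₀, ?_⟩
      have hsub : W t₀ ⊆ C.image (fun e => e t₀) := by
        intro b hb
        obtain ⟨e, he, heb⟩ := hall b hb
        exact Finset.mem_image.mpr ⟨e, he, heb⟩
      calc (W t₀).card ≤ (C.image (fun e => e t₀)).card := Finset.card_le_card hsub
        _ ≤ C.card := Finset.card_image_le
    · push_neg at hodd
      obtain ⟨e₀, he₀⟩ := hC
      have ha₀ : e₀ t₀ ∈ W t₀ := hmem e₀ he₀ t₀ ht₀
      set C₀ := C.filter (fun e => e t₀ = e₀ t₀) with hC₀def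
      have he₀' : e₀ ∈ C₀ := Finset.mem_filter.mpr ⟨he₀, rfl⟩
      by_cases hS'ne : S'.Nonempty
      · have hcard' : S'.card ≤ N := by
          have h1 : S'.card = S.card - 1 := by
            rw [hS'def]; exact Finset.card_erase_of_mem ht₀
          have h2 : 1 ≤ S.card := Finset.card_pos.mpr ⟨t₀, ht₀⟩
          omega
        have hres := IH S' hcard' hS'ne W C₀ ⟨e₀, he₀'⟩
          (fun e he t ht => hmem e (Finset.mem_of_mem_filter e he) t (Finset.mem_of_mem_erase ht))
          (by
            intro e he f hf t ht
            rcases eq_or_ne t t₀ with rfl | hne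
            · rw [(Finset.mem_filter.mp he).2, (Finset.mem_filter.mp hf).2]
            · have : t ∉ S := fun hts => ht (Finset.mem_erase.mpr ⟨hne, hts⟩)
              exact hconst e (Finset.mem_of_mem_filter e he) f (Finset.mem_of_mem_filter f hf) t this)
          (by
            intro P' hP'
            have := hodd (e₀ t₀) ha₀ P' hP'
            rw [hC₀def, Finset.filter_filter]
            exact this)
        obtain ⟨t, ht, hbound⟩ := hres
        exact ⟨t, Finset.mem_of_mem_erase ht,
          le_trans hbound (Finset.card_le_card (Finset.filter_subset _ _))⟩
      · -- S = {t₀}; C₀ is a singleton but must have even cardinality: contradiction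
        exfalso
        have hSeq : S = {t₀} := by
          rw [Finset.not_nonempty_iff_eq_empty] at hS'ne
          rw [hS'def] at hS'ne
          rcases (Finset.erase_eq_empty_iff S t₀).mp hS'ne with h | h
          · exact absurd h (Finset.nonempty_iff_ne_empty.mp ⟨t₀, ht₀⟩)
          · exact h
        have heven := hodd (e₀ t₀) ha₀ (fun _ => ∅)
          (by intro t ht; rw [hS'def, hSeq] at ht; simp at ht)
        have hfilt : (C.filter fun e => e t₀ = e₀ t₀ ∧ ∀ t ∈ S', e t ∈ (∅ : Finset α)) = C₀ := by
          apply Finset.filter_congr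
          intro e _
          constructor
          · rintro ⟨h1, _⟩; exact h1
          · intro h1
            refine ⟨h1, fun t ht => ?_⟩
            rw [hS'def, hSeq] at ht; simp at ht
        rw [hfilt] at heven
        have hcard1 : C₀.card = 1 := by
          have hle : C₀.card ≤ 1 := by
            rw [Finset.card_le_one]
            intro e he f hf
            funext t
            rcases eq_or_ne t t₀ with rfl | hne
            · rw [(Finset.mem_filter.mp he).2, (Finset.mem_filter.mp hf).2]
            · have : t ∉ S := by rw [hSeq]; simp [hne]
              exact hconst e (Finset.mem_of_mem_filter e he) f (Finset.mem_of_mem_filter f hf) t this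
          have hge : 1 ≤ C₀.card := Finset.card_pos.mpr ⟨e₀, he₀'⟩
          omega
        rw [hcard1] at heven
        simp at heven

lemma oct_minweight {α : Type*} [DecidableEq α] {n : ℕ}
    (S : Finset (Fin n)) (hS : S.Nonempty)
    (W : Fin n → Finset α) (C : Finset (Fin n → α)) (hC : C.Nonempty)
    (hmem : ∀ e ∈ C, ∀ t ∈ S, e t ∈ W t)
    (hconst : ∀ e ∈ C, ∀ f ∈ C, ∀ t, t ∉ S → e t = f t)
    (hpar : ∀ P : Fin n → Finset α, (∀ t ∈ S, P t ⊆ W t ∧ (P t).card = 2) →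
      Even ((C.filter fun e => ∀ t ∈ S, e t ∈ P t).card)) :
    ∃ t ∈ S, (W t).card ≤ C.card :=
  oct_minweight_aux S.card S le_rfl hS W C hC hmem hconst hpar

set_option maxHeartbeats 1600000 in
/-- Lemma 2 (`tech`). Here vertex sets are zero-indexed: `|V_i| = k − 1`
for `i < z`, `|V_i| = k` for `z ≤ i < k`, and `k ≤ |V_i|` nondecreasing for `k ≤ i`.
If some `X ⊆ ⋃_{i ≥ z} V_i` with `|X| ≥ 2` induces in `D(Ω)` a complete subgraph without
outneighbour, then `Ω` has at least `(k−1)² + 2` edges, unless `n = 4`, `k = 3`, `z = 2`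
(the `(2,2,3,3)` case), in which case it has at least `5` edges. -/
theorem octahedral_tech_lemma {α : Type*} [DecidableEq α] {n k z : ℕ}
    (hn : 4 ≤ n) (hk : 3 ≤ k) (hkn : k ≤ n) (hz : z < k)
    (V : Fin n → Finset α) (E : Finset (Fin n → α))
    (hdisj : ∀ i j : Fin n, i ≠ j → Disjoint (V i) (V j))
    (hcard1 : ∀ i : Fin n, (i : ℕ) < z → (V i).card = k - 1)
    (hcard2 : ∀ i : Fin n, z ≤ (i : ℕ) → (i : ℕ) < k → (V i).card = k)
    (hcard3 : ∀ i : Fin n, k ≤ (i : ℕ) → k ≤ (V i).card)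
    (hmono : ∀ i j : Fin n, k ≤ (i : ℕ) → i ≤ j → (V i).card ≤ (V j).card)
    (hoct : IsOctahedralSystem V E)
    (hiso : NoIsolatedVertex V E)
    (X : Finset α) (hX2 : 2 ≤ X.card)
    (hXsub : ∀ x ∈ X, ∃ i : Fin n, z ≤ (i : ℕ) ∧ x ∈ V i)
    (hXcomp : ∀ u ∈ X, ∀ v ∈ X, u ≠ v → OctArc E u v)
    (hXout : ∀ u ∈ X, ∀ v, OctArc E u v → v ∈ X) :
    (¬(n = 4 ∧ k = 3 ∧ z = 2) → (k - 1) ^ 2 + 2 ≤ E.card) ∧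
    ((n = 4 ∧ k = 3 ∧ z = 2) → 5 ≤ E.card) := by
  classical
  obtain ⟨u₁, hu₁X, u₂, hu₂X, hu12⟩ := Finset.one_lt_card.mp hX2
  -- each element of α lies in at most one part
  have huniq : ∀ (a : α) (i j : Fin n), a ∈ V i → a ∈ V j → i = j := by
    intro a i j hi hj
    by_contra hne
    exact Finset.disjoint_left.mp (hdisj i j hne) hi hj
  -- a choice of part index for elements of X
  obtain ⟨idx, hidx⟩ : ∃ idx : α → Fin n, ∀ x ∈ X, z ≤ ((idx x : Fin n) : ℕ) ∧ x ∈ V (idx x) := by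
    refine ⟨fun a => if h : ∃ i : Fin n, z ≤ (i : ℕ) ∧ a ∈ V i then h.choose else ⟨0, by omega⟩, ?_⟩
    intro x hx
    have h := hXsub x hx
    dsimp only
    rw [dif_pos h]
    exact h.choose_spec
  have hXV : ∀ x ∈ X, x ∈ V (idx x) := fun x hx => (hidx x hx).2
  -- an edge containing a vertex of V i contains it at coordinate i
  have hloc : ∀ e ∈ E, ∀ (i : Fin n), ∀ a ∈ V i, (∃ j, e j = a) → e i = a := by
    rintro e he i a ha ⟨j, hj⟩
    have hj' : e j ∈ V j := hoct.1 e he j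
    rw [hj] at hj'
    exact (huniq a j i hj' ha) ▸ hj
  -- idx is injective on X
  have hinj : ∀ x ∈ X, ∀ x' ∈ X, idx x = idx x' → x = x' := by
    intro x hx x' hx' hii
    by_contra hne
    obtain ⟨-, harc2⟩ := hXcomp x hx x' hx' hne
    obtain ⟨e, he, hei⟩ := hiso (idx x') x' (hXV x' hx')
    have hex : e (idx x) = x :=
      hloc e he (idx x) x (hXV x hx) (harc2 e he ⟨idx x', hei⟩)
    rw [hii, hei] at hex
    exact hne hex.symm
  set I : Finset (Fin n) := X.image idx with hIdef
  have hIc : ∀ i : Fin n, i ∈ I ↔ ∃ x ∈ X, idx x = i := by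
    intro i; rw [hIdef]; simp [Finset.mem_image]
  set EX : Finset (Fin n → α) := E.filter (fun e => ∀ x ∈ X, e (idx x) = x) with hEXdef
  set E' : Finset (Fin n → α) := E.filter (fun e => ¬ ∀ x ∈ X, e (idx x) = x) with hE'def
  have hEcard : EX.card + E'.card = E.card := by
    rw [hEXdef, hE'def]
    exact Finset.card_filter_add_card_filter_not _
  -- an edge containing one element of X contains all of them
  have hEXchar : ∀ e ∈ E, (∃ x ∈ X, ∃ j, e j = x) → ∀ x ∈ X, e (idx x) = x := by
    rintro e he ⟨x₀, hx₀, hcont⟩ x hx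
    rcases eq_or_ne x x₀ with rfl | hne
    · exact hloc e he (idx x) x (hXV x hx) hcont
    · obtain ⟨-, harc2⟩ := hXcomp x hx x₀ hx₀ hne
      have hx₀loc : e (idx x₀) = x₀ := hloc e he (idx x₀) x₀ (hXV x₀ hx₀) hcont
      exact hloc e he (idx x) x (hXV x hx) (harc2 e he ⟨idx x₀, hx₀loc⟩)
  have hE'avoid : ∀ e ∈ E', ∀ x ∈ X, ∀ j, e j ≠ x := by
    intro e he x hx j hj
    rw [hE'def, Finset.mem_filter] at he
    exact he.2 (hEXchar e he.1 ⟨x, hx, j, hj⟩)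
  have hEXne : EX.Nonempty := by
    obtain ⟨e, he, hei⟩ := hiso (idx u₁) u₁ (hXV u₁ hu₁X)
    exact ⟨e, Finset.mem_filter.mpr ⟨he, hEXchar e he ⟨u₁, hu₁X, idx u₁, hei⟩⟩⟩
  -- every part has at least k-1 elements
  have hminV : ∀ t : Fin n, k - 1 ≤ (V t).card := by
    intro t
    rcases Nat.lt_or_ge (t : ℕ) z with h | h
    · rw [hcard1 t h]
    · rcases Nat.lt_or_ge (t : ℕ) k with h2 | h2
      · rw [hcard2 t h h2]; omega
      · have := hcard3 t h2; omega
  have hVI : ∀ x ∈ X, k ≤ (V (idx x)).card := by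
    intro x hx
    rcases Nat.lt_or_ge ((idx x : Fin n) : ℕ) k with h2 | h2
    · rw [hcard2 (idx x) (hidx x hx).1 h2]
    · exact hcard3 (idx x) h2
  -- every vertex not in X lies on an edge avoiding X
  have hcover : ∀ t : Fin n, ∀ v ∈ V t, v ∉ X → ∃ e ∈ E', e t = v := by
    intro t v hv hvX
    have hnarc : ¬ OctArc E u₁ v := fun harc => hvX (hXout u₁ hu₁X v harc)
    rw [OctArc] at hnarc
    push_neg at hnarc
    have hne : u₁ ≠ v := fun h => hvX (h ▸ hu₁X)
    obtain ⟨e, he, hev, hnu⟩ := hnarc hne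
    refine ⟨e, Finset.mem_filter.mpr ⟨he, fun hall => hnu (idx u₁) (hall u₁ hu₁X)⟩, ?_⟩
    exact hloc e he t v hv hev
  -- vertices of parts outside I are not in X
  have hnotI : ∀ t : Fin n, t ∉ I → ∀ v ∈ V t, v ∉ X := by
    intro t ht v hv hvX
    exact ht ((hIc t).mpr ⟨v, hvX, (huniq v (idx v) t (hXV v hvX) hv).symm ▸ rfl⟩)
  -- the fundamental parity relation
  have star : ∀ y : α → α, (∀ x ∈ X, y x ∈ V (idx x) ∧ y x ≠ x) →
      ∀ P : Fin n → Finset α, (∀ t : Fin n, t ∉ I → P t ⊆ V t ∧ (P t).card = 2) →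
      Even ((EX.filter fun e => ∀ t, t ∉ I → e t ∈ P t).card
        + (E'.filter fun e => (∀ x ∈ X, e (idx x) = y x) ∧ ∀ t, t ∉ I → e t ∈ P t).card) := by
    intro y hy P hP
    have hWsing : ∀ i ∈ I, ∃ x, x ∈ X ∧ idx x = i ∧ X.filter (fun x => idx x = i) = {x} := by
      intro i hi
      obtain ⟨x, hx, hxi⟩ := (hIc i).mp hi
      refine ⟨x, hx, hxi, ?_⟩
      ext a
      simp only [Finset.mem_filter, Finset.mem_singleton]
      constructor
      · rintro ⟨haX, hai⟩
        exact hinj a haX x hx (by rw [hai, hxi])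
      · rintro rfl
        exact ⟨hx, hxi⟩
    set Q : Fin n → Finset α :=
      fun i => if i ∈ I then (X.filter (fun x => idx x = i)).biUnion (fun x => {x, y x}) else P i
      with hQdef
    have hQI : ∀ x ∈ X, Q (idx x) = {x, y x} := by
      intro x hx
      have hi : idx x ∈ I := (hIc (idx x)).mpr ⟨x, hx, rfl⟩
      obtain ⟨x', hx', hxi', hsing⟩ := hWsing (idx x) hi
      have hxx : x' = x := hinj x' hx' x hx hxi'
      rw [hQdef]
      simp only [if_pos hi, hsing, hxx, Finset.singleton_biUnion]
    have hQP : ∀ t, t ∉ I → Q t = P t := by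
      intro t ht; rw [hQdef]; simp only [if_neg ht]
    have hQsub : ∀ i, Q i ⊆ V i := by
      intro i
      by_cases hi : i ∈ I
      · obtain ⟨x, hx, rfl, -⟩ := hWsing i hi
        rw [hQI x hx]
        intro a ha
        simp only [Finset.mem_insert, Finset.mem_singleton] at ha
        rcases ha with ha | ha
        · rw [ha]; exact hXV x hx
        · rw [ha]; exact (hy x hx).1
      · rw [hQP i hi]; exact (hP i hi).1
    have hQcard : ∀ i, (Q i).card = 2 := by
      intro i
      by_cases hi : i ∈ I
      · obtain ⟨x, hx, rfl, -⟩ := hWsing i hi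
        rw [hQI x hx, Finset.card_insert_of_notMem (by simp [Ne.symm (hy x hx).2]),
          Finset.card_singleton]
      · rw [hQP i hi]; exact (hP i hi).2
    have hbox := hoct.2 Q hQsub hQcard
    have hsplit := Finset.card_filter_add_card_filter_not
      (s := E.filter fun e => ∀ i, e i ∈ Q i) (p := fun e => ∀ x ∈ X, e (idx x) = x)
    rw [Finset.filter_filter, Finset.filter_filter] at hsplit
    have e1 : (E.filter fun e => (∀ i, e i ∈ Q i) ∧ ∀ x ∈ X, e (idx x) = x)
        = EX.filter fun e => ∀ t, t ∉ I → e t ∈ P t := by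
      rw [hEXdef, Finset.filter_filter]
      apply Finset.filter_congr
      intro e he
      constructor
      · rintro ⟨hQ, hpX⟩
        exact ⟨hpX, fun t ht => by rw [← hQP t ht]; exact hQ t⟩
      · rintro ⟨hpX, hoff⟩
        refine ⟨fun i => ?_, hpX⟩
        by_cases hi : i ∈ I
        · obtain ⟨x, hx, rfl, -⟩ := hWsing i hi
          rw [hQI x hx, hpX x hx]
          exact Finset.mem_insert_self _ _
        · rw [hQP i hi]; exact hoff i hi
    have e2 : (E.filter fun e => (∀ i, e i ∈ Q i) ∧ ¬ ∀ x ∈ X, e (idx x) = x)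
        = E'.filter fun e => (∀ x ∈ X, e (idx x) = y x) ∧ ∀ t, t ∉ I → e t ∈ P t := by
      rw [hE'def, Finset.filter_filter]
      apply Finset.filter_congr
      intro e he
      constructor
      · rintro ⟨hQ, hnpX⟩
        have heE' : e ∈ E' := by rw [hE'def, Finset.mem_filter]; exact ⟨he, hnpX⟩
        refine ⟨hnpX, fun x hx => ?_, fun t ht => by rw [← hQP t ht]; exact hQ t⟩
        have h1 := hQ (idx x)
        rw [hQI x hx] at h1
        simp only [Finset.mem_insert, Finset.mem_singleton] at h1
        rcases h1 with h1 | h1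
        · exact absurd h1 (hE'avoid e heE' x hx (idx x))
        · exact h1
      · rintro ⟨hnpX, hcls, hoff⟩
        refine ⟨fun i => ?_, hnpX⟩
        by_cases hi : i ∈ I
        · obtain ⟨x, hx, rfl, -⟩ := hWsing i hi
          rw [hQI x hx, hcls x hx]
          simp
        · rw [hQP i hi]; exact hoff i hi
    rw [e1, e2] at hsplit
    rw [← hsplit] at hbox
    exact hbox
  set S : Finset (Fin n) := Finset.univ.filter (fun t => t ∉ I) with hSdef
  have hSmem : ∀ t : Fin n, t ∈ S ↔ t ∉ I := by
    intro t; rw [hSdef]; simp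
  have hk1 : 2 ≤ k - 1 := by omega
  have harith : ∀ m : ℕ, (k - 1) ^ 2 + 2 ≤ m →
      ((¬(n = 4 ∧ k = 3 ∧ z = 2) → (k - 1) ^ 2 + 2 ≤ m) ∧
       ((n = 4 ∧ k = 3 ∧ z = 2) → 5 ≤ m)) := by
    intro m hm
    have h4 : 4 ≤ (k - 1) ^ 2 := by
      calc 4 = 2 ^ 2 := by norm_num
        _ ≤ (k - 1) ^ 2 := Nat.pow_le_pow_left hk1 2
    exact ⟨fun _ => hm, fun _ => by omega⟩
  by_cases hB : ∀ P : Fin n → Finset α, (∀ t : Fin n, t ∉ I → P t ⊆ V t ∧ (P t).card = 2) →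
      Even ((EX.filter fun e => ∀ t, t ∉ I → e t ∈ P t).card)
  · -- CASE B : all E_X box counts are even
    have hSne : S.Nonempty := by
      rw [Finset.nonempty_iff_ne_empty]
      intro hSempty
      have hallI : ∀ t : Fin n, t ∈ I := by
        intro t
        by_contra ht
        have h1 : t ∈ S := (hSmem t).mpr ht
        rw [hSempty] at h1
        exact absurd h1 (Finset.notMem_empty t)
      have hone : EX.card = 1 := by
        obtain ⟨e₀, he₀⟩ := hEXne
        have hle : EX.card ≤ 1 := by
          rw [Finset.card_le_one]
          intro e he f hf
          funext i
          obtain ⟨x, hx, hxi⟩ := (hIc i).mp (hallI i)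
          rw [← hxi, (Finset.mem_filter.mp he).2 x hx, (Finset.mem_filter.mp hf).2 x hx]
        have hge := Finset.card_pos.mpr ⟨e₀, he₀⟩
        omega
      have heven := hB (fun _ => ∅) (by intro t ht; exact absurd (hallI t) ht)
      have hfeq : (EX.filter fun e => ∀ t, t ∉ I → e t ∈ (∅ : Finset α)) = EX :=
        Finset.filter_true_of_mem (fun e _ t ht => absurd (hallI t) ht)
      rw [hfeq, hone] at heven
      simp at heven
    have hEX2 : 2 ≤ EX.card := by
      obtain ⟨t, htS, hbound⟩ := oct_minweight S hSne V EX hEXne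
        (fun e he t _ => hoct.1 e (Finset.mem_of_mem_filter e he) t)
        (by
          intro e he f hf t ht
          have htI : t ∈ I := by by_contra h; exact ht ((hSmem t).mpr h)
          obtain ⟨x, hx, hxi⟩ := (hIc t).mp htI
          rw [← hxi, (Finset.mem_filter.mp he).2 x hx, (Finset.mem_filter.mp hf).2 x hx])
        (by
          intro P hPS
          have hPnI : ∀ t : Fin n, t ∉ I → P t ⊆ V t ∧ (P t).card = 2 :=
            fun t ht => hPS t ((hSmem t).mpr ht)
          have heq : (EX.filter fun e => ∀ t ∈ S, e t ∈ P t)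
              = EX.filter fun e => ∀ t, t ∉ I → e t ∈ P t := by
            apply Finset.filter_congr
            intro e _
            exact ⟨fun h t ht => h t ((hSmem t).mpr ht), fun h t ht => h t ((hSmem t).mp ht)⟩
          rw [heq]
          exact hB P hPnI)
      calc 2 ≤ k - 1 := hk1
        _ ≤ (V t).card := hminV t
        _ ≤ EX.card := hbound
    have hclassbound : ∀ w ∈ V (idx u₁) \ {u₁},
        k - 1 ≤ (E'.filter (fun e => e (idx u₁) = w)).card := by
      intro w hw
      rw [Finset.mem_sdiff, Finset.mem_singleton] at hw
      obtain ⟨hwV, hwu⟩ := hw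
      have hwX : w ∉ X := by
        intro hwX
        exact hwu (hinj w hwX u₁ hu₁X (huniq w (idx w) (idx u₁) (hXV w hwX) hwV))
      obtain ⟨ew, hew, hewi⟩ := hcover (idx u₁) w hwV hwX
      have hewE : ew ∈ E := Finset.mem_of_mem_filter ew hew
      set Cw : Finset (Fin n → α) := E'.filter (fun e => ∀ x ∈ X, e (idx x) = ew (idx x))
        with hCwdef
      have hewCw : ew ∈ Cw := Finset.mem_filter.mpr ⟨hew, fun x hx => rfl⟩
      have hCwsub : Cw ⊆ E'.filter (fun e => e (idx u₁) = w) := by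
        intro e he
        rw [hCwdef, Finset.mem_filter] at he
        exact Finset.mem_filter.mpr ⟨he.1, by rw [he.2 u₁ hu₁X, hewi]⟩
      refine le_trans ?_ (Finset.card_le_card hCwsub)
      obtain ⟨t, htS, hbound⟩ := oct_minweight S hSne V Cw ⟨ew, hewCw⟩
        (fun e he t _ => hoct.1 e
          (Finset.mem_of_mem_filter e (Finset.mem_of_mem_filter e he)) t)
        (by
          intro e he f hf t ht
          have htI : t ∈ I := by by_contra h; exact ht ((hSmem t).mpr h)
          obtain ⟨x, hx, hxi⟩ := (hIc t).mp htI
          rw [← hxi, (Finset.mem_filter.mp he).2 x hx, (Finset.mem_filter.mp hf).2 x hx])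
        (by
          intro P hPS
          have hPnI : ∀ t : Fin n, t ∉ I → P t ⊆ V t ∧ (P t).card = 2 :=
            fun t ht => hPS t ((hSmem t).mpr ht)
          have hstar := star (fun a => ew (idx a))
            (fun x hx => ⟨hoct.1 ew hewE (idx x), hE'avoid ew hew x hx (idx x)⟩) P hPnI
          have hA := hB P hPnI
          rw [Nat.even_add] at hstar
          have hBev : Even ((E'.filter fun e =>
              (∀ x ∈ X, e (idx x) = ew (idx x)) ∧ ∀ t, t ∉ I → e t ∈ P t).card) :=
            hstar.mp hA
          have heq : (Cw.filter fun e => ∀ t ∈ S, e t ∈ P t)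
              = E'.filter fun e =>
                (∀ x ∈ X, e (idx x) = ew (idx x)) ∧ ∀ t, t ∉ I → e t ∈ P t := by
            rw [hCwdef, Finset.filter_filter]
            apply Finset.filter_congr
            intro e _
            constructor
            · rintro ⟨h1, h2⟩; exact ⟨h1, fun t ht => h2 t ((hSmem t).mpr ht)⟩
            · rintro ⟨h1, h2⟩; exact ⟨h1, fun t ht => h2 t ((hSmem t).mp ht)⟩
          rw [heq]
          exact hBev)
      exact le_trans (hminV t) hbound
    have hsum : (V (idx u₁) \ {u₁}).card * (k - 1) ≤ E'.card := by
      have h1 : ((V (idx u₁) \ {u₁}).biUnion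
          (fun w => E'.filter (fun e => e (idx u₁) = w))) ⊆ E' :=
        Finset.biUnion_subset.mpr (fun w _ => Finset.filter_subset _ _)
      have h2 := Finset.card_biUnion (s := V (idx u₁) \ {u₁})
        (t := fun w => E'.filter (fun e => e (idx u₁) = w))
        (by
          intro a _ b _ hab
          rw [Function.onFun, Finset.disjoint_left]
          intro e he1 he2
          rw [Finset.mem_filter] at he1 he2
          exact hab (he1.2 ▸ he2.2 ▸ rfl))
      have h3 : ∑ w ∈ (V (idx u₁) \ {u₁}), (k - 1)
          ≤ ∑ w ∈ (V (idx u₁) \ {u₁}), (E'.filter (fun e => e (idx u₁) = w)).card :=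
        Finset.sum_le_sum hclassbound
      rw [Finset.sum_const, smul_eq_mul] at h3
      calc (V (idx u₁) \ {u₁}).card * (k - 1) ≤ _ := h3
        _ = ((V (idx u₁) \ {u₁}).biUnion (fun w => E'.filter (fun e => e (idx u₁) = w))).card :=
          h2.symm
        _ ≤ E'.card := Finset.card_le_card h1
    have hTcard : k - 1 ≤ (V (idx u₁) \ {u₁}).card := by
      rw [Finset.card_sdiff_of_subset (Finset.singleton_subset_iff.mpr (hXV u₁ hu₁X))]
      have := hVI u₁ hu₁X
      simp only [Finset.card_singleton]
      omega
    have hfinal : (k - 1) ^ 2 + 2 ≤ E.card := by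
      have hmul : (k - 1) * (k - 1) ≤ E'.card :=
        le_trans (Nat.mul_le_mul_right _ hTcard) hsum
      have hpow : (k - 1) ^ 2 = (k - 1) * (k - 1) := by ring
      omega
    exact harith E.card hfinal
  · -- CASE A : some E_X box count is odd
    push_neg at hB
    obtain ⟨P₀, hP₀valid, hP₀odd⟩ := hB
    have hclassne : ∀ y : α → α, (∀ x ∈ X, y x ∈ V (idx x) ∧ y x ≠ x) →
        (E'.filter fun e => ∀ x ∈ X, e (idx x) = y x).Nonempty := by
      intro y hy
      have hstar := star y hy P₀ hP₀valid
      rw [Nat.even_add] at hstar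
      have hodd2 : ¬ Even ((E'.filter fun e =>
          (∀ x ∈ X, e (idx x) = y x) ∧ ∀ t, t ∉ I → e t ∈ P₀ t).card) :=
        fun h => hP₀odd (hstar.mpr h)
      have hne : (E'.filter fun e =>
          (∀ x ∈ X, e (idx x) = y x) ∧ ∀ t, t ∉ I → e t ∈ P₀ t).Nonempty := by
        rw [Finset.nonempty_iff_ne_empty]
        intro h
        rw [h] at hodd2
        exact hodd2 (by simp)
      obtain ⟨e, he⟩ := hne
      rw [Finset.mem_filter] at he
      exact ⟨e, Finset.mem_filter.mpr ⟨he.1, he.2.1⟩⟩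
    set PS := X.pi (fun a => V (idx a) \ {a}) with hPSdef
    set yf : ((a : α) → a ∈ X → α) → α → α :=
      fun σ a => if h : a ∈ X then σ a h else a with hyfdef
    have hyval : ∀ σ, ∀ (x : α) (hx : x ∈ X), yf σ x = σ x hx := by
      intro σ x hx; rw [hyfdef]; dsimp only; rw [dif_pos hx]
    have hyprop : ∀ σ ∈ PS, ∀ x ∈ X, yf σ x ∈ V (idx x) ∧ yf σ x ≠ x := by
      intro σ hσ x hx
      have h1 := Finset.mem_pi.mp hσ x hx
      rw [Finset.mem_sdiff, Finset.mem_singleton] at h1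
      rw [hyval σ x hx]
      exact ⟨h1.1, h1.2⟩
    have hPScard : (k - 1) ^ X.card ≤ PS.card := by
      rw [hPSdef, Finset.card_pi]
      refine Finset.pow_card_le_prod _ _ _ ?_
      intro a ha
      rw [Finset.card_sdiff_of_subset (Finset.singleton_subset_iff.mpr (hXV a ha))]
      have := hVI a ha
      simp only [Finset.card_singleton]
      omega
    have hpick : ∀ σ ∈ PS, ∃ e, e ∈ E'.filter fun e' => ∀ x ∈ X, e' (idx x) = yf σ x := by
      intro σ hσ
      obtain ⟨e, he⟩ := hclassne (yf σ) (hyprop σ hσ)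
      exact ⟨e, he⟩
    choose g hg using hpick
    set gf : ((a : α) → a ∈ X → α) → (Fin n → α) :=
      fun σ => if h : σ ∈ PS then g σ h else (fun _ => u₁) with hgfdef
    have hgf1 : ∀ σ ∈ PS, gf σ ∈ E' ∧ ∀ x ∈ X, gf σ (idx x) = yf σ x := by
      intro σ hσ
      rw [hgfdef]; dsimp only; rw [dif_pos hσ]
      have h1 := hg σ hσ
      rw [Finset.mem_filter] at h1
      exact ⟨h1.1, h1.2⟩
    have hE'ge : PS.card ≤ E'.card := by
      apply Finset.card_le_card_of_injOn gf (fun σ hσ => (hgf1 σ (Finset.mem_coe.mp hσ)).1)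
      intro σ hσ τ hτ hgeq
      have hσ' := Finset.mem_coe.mp hσ
      have hτ' := Finset.mem_coe.mp hτ
      funext a ha
      have h1 : gf σ (idx a) = σ a ha := by rw [(hgf1 σ hσ').2 a ha, hyval σ a ha]
      have h2 : gf τ (idx a) = τ a ha := by rw [(hgf1 τ hτ').2 a ha, hyval τ a ha]
      rw [← h1, ← h2, hgeq]
    have hEX1 : 1 ≤ EX.card := Finset.card_pos.mpr hEXne
    have h4 : 4 ≤ (k - 1) ^ 2 := by
      calc 4 = 2 ^ 2 := by norm_num
        _ ≤ (k - 1) ^ 2 := Nat.pow_le_pow_left hk1 2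
    by_cases hp3 : 3 ≤ X.card
    · have h1 : (k - 1) ^ 3 ≤ E'.card :=
        le_trans (Nat.pow_le_pow_right (by omega) hp3) (le_trans hPScard hE'ge)
      have hq : (k - 1) ^ 3 = (k - 1) ^ 2 * (k - 1) := by ring
      have hq2 : (k - 1) ^ 2 * 2 ≤ (k - 1) ^ 2 * (k - 1) := Nat.mul_le_mul_left _ hk1
      exact harith E.card (by omega)
    · have hp2 : X.card = 2 := by omega
      have hE'2 : (k - 1) ^ 2 ≤ E'.card := by
        rw [hp2] at hPScard
        exact le_trans hPScard hE'ge
      by_cases hEX2 : 2 ≤ EX.card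
      · exact harith E.card (by omega)
      · have hEXone : EX.card = 1 := by omega
        obtain ⟨estar, hestar⟩ := Finset.card_eq_one.mp hEXone
        have hestarEX : estar ∈ EX := by rw [hestar]; exact Finset.mem_singleton_self _
        have hestarE : estar ∈ E := Finset.mem_of_mem_filter _ hestarEX
        by_cases hsp : n = 4 ∧ k = 3 ∧ z = 2
        · refine ⟨fun hns => absurd hsp hns, fun _ => ?_⟩
          have h5 : (k - 1) ^ 2 = 4 := by rw [hsp.2.1]; norm_num
          omega
        · -- the non-special tight case: find one extra edge in E'
          have hE'3 : (k - 1) ^ 2 + 1 ≤ E'.card := by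
            by_contra hlt
            push_neg at hlt
            have hE'eq : E'.card = (k - 1) ^ 2 := by omega
            rw [hp2] at hPScard
            have hPSE : PS.card = E'.card := by omega
            -- E' is the disjoint union of its classes
            have hcup : PS.biUnion
                (fun σ => E'.filter fun e => ∀ x ∈ X, e (idx x) = yf σ x) = E' := by
              apply Finset.Subset.antisymm
              · exact Finset.biUnion_subset.mpr (fun σ _ => Finset.filter_subset _ _)
              · intro e he
                have hσe : (fun a (_ : a ∈ X) => e (idx a)) ∈ PS := by
                  rw [hPSdef, Finset.mem_pi]
                  intro a ha
                  rw [Finset.mem_sdiff, Finset.mem_singleton]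
                  exact ⟨hoct.1 e (Finset.mem_of_mem_filter e he) (idx a),
                    hE'avoid e he a ha (idx a)⟩
                refine Finset.mem_biUnion.mpr ⟨_, hσe, Finset.mem_filter.mpr ⟨he, ?_⟩⟩
                intro x hx
                exact (hyval (fun a (_ : a ∈ X) => e (idx a)) x hx).symm
            have hdisjcl : ∀ σ ∈ PS, ∀ τ ∈ PS, σ ≠ τ →
                Disjoint (E'.filter fun e => ∀ x ∈ X, e (idx x) = yf σ x)
                  (E'.filter fun e => ∀ x ∈ X, e (idx x) = yf τ x) := by
              intro σ _ τ _ hστ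
              rw [Finset.disjoint_left]
              intro e he1 he2
              apply hστ
              funext a ha
              have h1 := (Finset.mem_filter.mp he1).2 a ha
              have h2 := (Finset.mem_filter.mp he2).2 a ha
              exact ((hyval σ a ha).symm.trans (h1.symm.trans h2)).trans (hyval τ a ha)
            have honeall : ∀ σ ∈ PS,
                (E'.filter fun e => ∀ x ∈ X, e (idx x) = yf σ x).card = 1 := by
              have hsumcl : ∑ σ ∈ PS,
                  (E'.filter fun e => ∀ x ∈ X, e (idx x) = yf σ x).card = E'.card :=
                (Finset.card_biUnion hdisjcl).symm.trans (congrArg Finset.card hcup)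
              have h1le : ∀ σ ∈ PS,
                  (1 : ℕ) ≤ (E'.filter fun e => ∀ x ∈ X, e (idx x) = yf σ x).card :=
                fun σ hσ => Finset.card_pos.mpr (hclassne (yf σ) (hyprop σ hσ))
              have hsumeq : ∑ _σ ∈ PS, (1 : ℕ) = ∑ σ ∈ PS,
                  (E'.filter fun e => ∀ x ∈ X, e (idx x) = yf σ x).card := by
                rw [hsumcl, ← Finset.card_eq_sum_ones]
                exact hPSE
              have hall := (Finset.sum_eq_sum_iff_of_le h1le).mp hsumeq
              intro σ hσ
              exact (hall σ hσ).symm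
            -- a part outside I with at least 3 vertices
            obtain ⟨tstar, htI, htV⟩ : ∃ t : Fin n, t ∉ I ∧ 3 ≤ (V t).card := by
              have hIle : I.card ≤ 2 := by
                rw [hIdef]
                calc (X.image idx).card ≤ X.card := Finset.card_image_le
                  _ = 2 := hp2
              by_cases hk4 : 4 ≤ k
              · have : ∃ t : Fin n, t ∉ I := by
                  by_contra hall
                  push_neg at hall
                  have : (Finset.univ : Finset (Fin n)) ⊆ I := fun t _ => hall t
                  have h5 := Finset.card_le_card this
                  rw [Finset.card_univ, Fintype.card_fin] at h5
                  omega
                obtain ⟨t, ht⟩ := this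
                exact ⟨t, ht, by have := hminV t; omega⟩
              · have hk3 : k = 3 := by omega
                have hzn : z + 2 < n := by
                  have h6 : ¬(n = 4 ∧ z = 2) := fun h => hsp ⟨h.1, hk3, h.2⟩
                  omega
                have hlt1 : z < n := by omega
                have hlt2 : z + 1 < n := by omega
                have hbig : ∀ t : Fin n, z ≤ (t : ℕ) → 3 ≤ (V t).card := by
                  intro t ht
                  rcases Nat.lt_or_ge (t : ℕ) k with h | h
                  · rw [hcard2 t ht h]; omega
                  · have := hcard3 t h; omega
                have : ∃ t : Fin n, z ≤ (t : ℕ) ∧ t ∉ I := by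
                  by_contra hall
                  push_neg at hall
                  have hsub : ({⟨z, hlt1⟩, ⟨z + 1, hlt2⟩, ⟨z + 2, hzn⟩} : Finset (Fin n)) ⊆ I := by
                    intro t ht
                    simp only [Finset.mem_insert, Finset.mem_singleton] at ht
                    rcases ht with rfl | rfl | rfl
                    · exact hall _ (le_refl z)
                    · exact hall _ (Nat.le_succ z)
                    · exact hall _ (Nat.le_add_right z 2)
                  have hc3 : ({⟨z, hlt1⟩, ⟨z + 1, hlt2⟩, ⟨z + 2, hzn⟩} : Finset (Fin n)).card = 3 :=
                    Finset.card_eq_three.mpr ⟨_, _, _,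
                      Fin.ne_of_val_ne (show z ≠ z + 1 by omega),
                      Fin.ne_of_val_ne (show z ≠ z + 2 by omega),
                      Fin.ne_of_val_ne (show z + 1 ≠ z + 2 by omega), rfl⟩
                  have := Finset.card_le_card hsub
                  omega
                obtain ⟨t, ht1, ht2⟩ := this
                exact ⟨t, ht2, hbig t ht1⟩
            -- a second vertex in every part
            have hauxex : ∀ s : Fin n, ∃ b ∈ V s, b ≠ estar s := by
              intro s
              exact Finset.exists_mem_ne (by have := hminV s; omega) (estar s)
            choose aux hauxV hauxne using hauxex
            -- separation: the unique edge of each class agrees with estar at tstar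
            have hsep : ∀ σ ∈ PS,
                ∀ e ∈ (E'.filter fun e' => ∀ x ∈ X, e' (idx x) = yf σ x),
                e tstar = estar tstar := by
              intro σ hσ e he
              by_contra hne
              have heE : e ∈ E := Finset.mem_of_mem_filter e (Finset.mem_of_mem_filter e he)
              obtain ⟨d, hd⟩ : ∃ d, d ∈ V tstar \ {estar tstar, e tstar} := by
                apply Finset.Nonempty.exists_mem
                rw [← Finset.card_pos]
                have hp2le : ({estar tstar, e tstar} : Finset α).card ≤ 2 := by
                  calc ({estar tstar, e tstar} : Finset α).card
                      ≤ ({e tstar} : Finset α).card + 1 := Finset.card_insert_le _ _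
                    _ = 2 := by simp
                have := Finset.le_card_sdiff ({estar tstar, e tstar} : Finset α) (V tstar)
                omega
              rw [Finset.mem_sdiff] at hd
              have hd2 : d ≠ estar tstar ∧ d ≠ e tstar := by
                have := hd.2
                simp only [Finset.mem_insert, Finset.mem_singleton] at this
                tauto
              set P : Fin n → Finset α := fun s =>
                if s = tstar then ({estar tstar, d} : Finset α)
                else if estar s = e s then {estar s, aux s} else {estar s, e s} with hPdef
              have hPvalid : ∀ s : Fin n, s ∉ I → P s ⊆ V s ∧ (P s).card = 2 := by
                intro s _
                simp only [hPdef]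
                by_cases hst : s = tstar
                · subst hst
                  rw [if_pos rfl]
                  constructor
                  · intro b hb
                    simp only [Finset.mem_insert, Finset.mem_singleton] at hb
                    rcases hb with rfl | rfl
                    · exact hoct.1 estar hestarE s
                    · exact hd.1
                  · rw [Finset.card_insert_of_notMem (by simp [Ne.symm hd2.1]),
                      Finset.card_singleton]
                · rw [if_neg hst]
                  by_cases hse : estar s = e s
                  · rw [if_pos hse]
                    constructor
                    · intro b hb
                      simp only [Finset.mem_insert, Finset.mem_singleton] at hb
                      rcases hb with rfl | rfl
                      · exact hoct.1 estar hestarE s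
                      · exact hauxV s
                    · rw [Finset.card_insert_of_notMem (by simp [Ne.symm (hauxne s)]),
                        Finset.card_singleton]
                  · rw [if_neg hse]
                    constructor
                    · intro b hb
                      simp only [Finset.mem_insert, Finset.mem_singleton] at hb
                      rcases hb with rfl | rfl
                      · exact hoct.1 estar hestarE s
                      · exact hoct.1 e heE s
                    · rw [Finset.card_insert_of_notMem (by simp [hse]),
                        Finset.card_singleton]
              have hstar := star (yf σ) (hyprop σ hσ) P hPvalid
              -- the EX side has exactly one element
              have hoffstar : ∀ t : Fin n, t ∉ I → estar t ∈ P t := by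
                intro t _
                simp only [hPdef]
                by_cases hst : t = tstar
                · subst hst
                  rw [if_pos rfl]
                  exact Finset.mem_insert_self _ _
                · rw [if_neg hst]
                  by_cases hse : estar t = e t
                  · rw [if_pos hse]; exact Finset.mem_insert_self _ _
                  · rw [if_neg hse]; exact Finset.mem_insert_self _ _
              have hA : (EX.filter fun e' => ∀ t, t ∉ I → e' t ∈ P t).card = 1 := by
                rw [hestar, Finset.filter_singleton, if_pos hoffstar, Finset.card_singleton]
              have hBzero : (E'.filter fun e' =>
                  (∀ x ∈ X, e' (idx x) = yf σ x) ∧ ∀ t, t ∉ I → e' t ∈ P t).card = 0 := by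
                rw [Finset.card_eq_zero, Finset.eq_empty_iff_forall_notMem]
                intro e' he'
                rw [Finset.mem_filter] at he'
                obtain ⟨he'E, hcls', hoff'⟩ := he'
                have he'cl : e' ∈ E'.filter fun e'' => ∀ x ∈ X, e'' (idx x) = yf σ x :=
                  Finset.mem_filter.mpr ⟨he'E, hcls'⟩
                have he'e : e' = e := by
                  exact Finset.card_le_one.mp (le_of_eq (honeall σ hσ)) e' he'cl e he
                have := hoff' tstar htI
                rw [he'e] at this
                simp only [hPdef, eq_self_iff_true, if_true] at this
                simp only [Finset.mem_insert, Finset.mem_singleton] at this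
                rcases this with h | h
                · exact hne h
                · exact hd2.2 h.symm
              rw [hA, hBzero] at hstar
              norm_num at hstar
            -- but some vertex of V tstar different from estar tstar must be covered by E'
            have hwX : aux tstar ∉ X := hnotI tstar htI (aux tstar) (hauxV tstar)
            obtain ⟨ew, hew, hewt⟩ := hcover tstar (aux tstar) (hauxV tstar) hwX
            obtain ⟨σw, hσw, hewcl⟩ := Finset.mem_biUnion.mp (hcup ▸ hew)
            have := hsep σw hσw ew hewcl
            rw [hewt] at this
            exact hauxne tstar this
          exact harith E.card (by omega)
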